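/- Let f : [0,1]^ℕ → [0,1] be coordinate-wise nondecreasing and measurable, and let Δ_{i,j}^∞ f be the centering of f in the i-th binary digit of coordinate j (as above). Then for each j, Σ_{i=1}^∞ E((Δ_{i,j}^∞ f)^2) ≤ (1/2) E[ f(X^∞ | y_j = 1) − f(X^∞ | y_j = 0) ], where f(X^∞ | y_j = t) denotes f with the j-th coordinate replaced by t. -/

import Mathlib

open MeasureTheory ProbabilityTheory

/-- The `i`-th binary digit of `y` (for `i ≥ 1`): `b_i(y) = ⌊y·2^i⌋ mod 2`. -/
noncomputable def binDigit (i : ℕ) (y : ℝ) : ℝ := if Odd ⌊y * 2 ^ i⌋ then 1 else 0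

/-- `y` with its `i`-th binary digit forced to `ε ∈ {0,1}`. -/
noncomputable def setBinDigit (i : ℕ) (ε : ℝ) (y : ℝ) : ℝ := y + (ε - binDigit i y) / 2 ^ i

lemma measurable_binDigit (n : ℕ) : Measurable (binDigit n) := by
  unfold binDigit
  have h1 : Measurable fun y : ℝ => ⌊y * 2 ^ n⌋ := (measurable_id.mul_const _).floor
  have h2 : MeasurableSet ((fun y : ℝ => ⌊y * 2 ^ n⌋) ⁻¹' {m : ℤ | Odd m}) :=
    h1 ((Set.to_countable _).measurableSet)
  exact Measurable.ite h2 measurable_const measurable_const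

lemma measurable_setBinDigit (n : ℕ) (ε : ℝ) : Measurable (setBinDigit n ε) :=
  measurable_id.add ((measurable_const.sub (measurable_binDigit n)).div_const _)

/-- Key digit facts. -/
lemma digit_facts (n : ℕ) (hn : 1 ≤ n) {y : ℝ} (hy : y ∈ Set.Ico (0:ℝ) 1) :
    max (y - ((2:ℝ)^n)⁻¹) 0 ≤ setBinDigit n 0 y ∧
    setBinDigit n 0 y ≤ setBinDigit n 1 y ∧
    setBinDigit n 1 y ≤ min (y + ((2:ℝ)^n)⁻¹) 1 := by
  obtain ⟨hy0, hy1⟩ := hy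
  have h2n : (0:ℝ) < 2 ^ n := by positivity
  have hip : (0:ℝ) < ((2:ℝ)^n)⁻¹ := by positivity
  set m : ℤ := ⌊y * 2 ^ n⌋ with hm
  have hm0 : 0 ≤ m := Int.floor_nonneg.mpr (by positivity)
  have hmle : (m : ℝ) ≤ y * 2 ^ n := Int.floor_le _
  have hmgt : y * 2 ^ n < (m : ℝ) + 1 := Int.lt_floor_add_one _
  have hmlt : m < (2:ℤ) ^ n := by
    have : y * 2 ^ n < 2 ^ n := by nlinarith
    exact_mod_cast Int.floor_lt.mpr (by push_cast; linarith)
  by_cases hodd : Odd m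
  · have hb : binDigit n y = 1 := by rw [binDigit, if_pos hodd]
    have hs0 : setBinDigit n 0 y = y - ((2:ℝ)^n)⁻¹ := by
      rw [setBinDigit, hb]; ring
    have hs1 : setBinDigit n 1 y = y := by rw [setBinDigit, hb]; ring
    have hm1 : (1:ℤ) ≤ m := by
      rcases hodd with ⟨k, hk⟩; omega
    have h1m : (1:ℝ) ≤ y * 2 ^ n := by
      have : (1:ℝ) ≤ (m:ℝ) := by exact_mod_cast hm1
      linarith
    have hyge : ((2:ℝ)^n)⁻¹ ≤ y := by
      rw [inv_le_iff_one_le_mul₀ h2n]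
      nlinarith
    refine ⟨?_, ?_, ?_⟩
    · rw [hs0]; exact max_le le_rfl (by linarith)
    · rw [hs0, hs1]; linarith
    · rw [hs1]; exact le_min (by linarith) hy1.le
  · have hb : binDigit n y = 0 := by rw [binDigit, if_neg hodd]
    have hs0 : setBinDigit n 0 y = y := by rw [setBinDigit, hb]; ring
    have hs1 : setBinDigit n 1 y = y + ((2:ℝ)^n)⁻¹ := by
      rw [setBinDigit, hb]; ring
    have heven : Even m := Int.not_odd_iff_even.mp hodd
    have hdvd : (2:ℤ) ∣ 2 ^ n := dvd_pow_self 2 (by omega)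
    have hmle2 : m ≤ 2 ^ n - 2 := by
      obtain ⟨k, hk⟩ := heven
      obtain ⟨c, hc⟩ := hdvd
      omega
    have hylt : y + ((2:ℝ)^n)⁻¹ ≤ 1 := by
      have h1 : y * 2 ^ n < ((2:ℝ) ^ n - 1) := by
        have : (m:ℝ) ≤ (2:ℝ) ^ n - 2 := by exact_mod_cast hmle2
        linarith
      have h3 := mul_le_mul_of_nonneg_right (le_of_lt h1) (le_of_lt hip)
      rw [mul_inv_cancel_right₀ (ne_of_gt h2n)] at h3
      have h2 : ((2:ℝ)^n - 1) * ((2:ℝ)^n)⁻¹ = 1 - ((2:ℝ)^n)⁻¹ := by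
        field_simp
      rw [h2] at h3
      linarith
    refine ⟨?_, ?_, ?_⟩
    · rw [hs0]; exact max_le (by linarith) hy0
    · rw [hs0, hs1]; linarith
    · rw [hs1]; exact le_min le_rfl hylt

lemma intervalIntegrable_of_bdd {g : ℝ → ℝ} (hg : Measurable g) (hr : ∀ y, |g y| ≤ 1) (a b : ℝ) :
    IntervalIntegrable g volume a b := by
  refine ⟨?_, ?_⟩ <;>
  · refine Measure.integrableOn_of_bounded (M := 1) (by simp [measure_Ioc_lt_top.ne])
      hg.aestronglyMeasurable ?_
    exact ae_of_all _ fun y => by simpa [Real.norm_eq_abs] using hr y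

/-- 1-D translation estimate. -/
lemma oneD {g : ℝ → ℝ} (hg : Measurable g) (hr : ∀ y, g y ∈ Set.Icc (0:ℝ) 1)
    (hm : MonotoneOn g (Set.Icc (0:ℝ) 1)) {h : ℝ} (h0 : 0 < h) (h2 : h ≤ 1/2) :
    ∫ y in Set.Icc (0:ℝ) 1, (g (min (y + h) 1) - g (max (y - h) 0)) ≤ 2 * h * (g 1 - g 0) := by
  have habs : ∀ y, |g y| ≤ 1 := fun y => abs_le.mpr ⟨by linarith [(hr y).1], (hr y).2⟩
  have h1h : h ≤ 1 - h := by linarith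
  have h01h : (0:ℝ) ≤ 1 - h := by linarith
  have hgmin : Measurable fun y => g (min (y + h) 1) :=
    hg.comp ((measurable_id.add_const h).min measurable_const)
  have hgmax : Measurable fun y => g (max (y - h) 0) :=
    hg.comp ((measurable_id.sub_const h).max measurable_const)
  have hgi : ∀ a b, IntervalIntegrable g volume a b := intervalIntegrable_of_bdd hg habs
  have hgimin : ∀ a b, IntervalIntegrable (fun y => g (min (y + h) 1)) volume a b :=
    intervalIntegrable_of_bdd hgmin (fun y => habs _)
  have hgimax : ∀ a b, IntervalIntegrable (fun y => g (max (y - h) 0)) volume a b :=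
    intervalIntegrable_of_bdd hgmax (fun y => habs _)
  have hIcc : ∀ F : ℝ → ℝ, ∫ y in Set.Icc (0:ℝ) 1, F y = ∫ y in (0:ℝ)..1, F y := by
    intro F
    rw [intervalIntegral.integral_of_le zero_le_one, integral_Icc_eq_integral_Ioc]
  rw [hIcc]
  rw [intervalIntegral.integral_sub (hgimin 0 1) (hgimax 0 1)]
  have hA : ∫ y in (0:ℝ)..1, g (min (y + h) 1)
      = (∫ y in h..1, g y) + h * g 1 := by
    rw [← intervalIntegral.integral_add_adjacent_intervals (b := 1 - h)
      (hgimin 0 (1-h)) (hgimin (1-h) 1)]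
    have e1 : ∫ y in (0:ℝ)..(1-h), g (min (y + h) 1) = ∫ y in (0:ℝ)..(1-h), g (y + h) := by
      refine intervalIntegral.integral_congr fun y hy => ?_
      rw [Set.uIcc_of_le h01h] at hy
      rw [min_eq_left (by linarith [hy.2])]
    have e2 : ∫ y in (1-h:ℝ)..1, g (min (y + h) 1) = ∫ y in (1-h:ℝ)..1, g 1 := by
      refine intervalIntegral.integral_congr fun y hy => ?_
      rw [Set.uIcc_of_le (by linarith : (1-h:ℝ) ≤ 1)] at hy
      rw [min_eq_right (by linarith [hy.1])]
    rw [e1, e2, intervalIntegral.integral_comp_add_right g h,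
      intervalIntegral.integral_const]
    norm_num
  have hB : ∫ y in (0:ℝ)..1, g (max (y - h) 0)
      = h * g 0 + (∫ y in (0:ℝ)..(1-h), g y) := by
    rw [← intervalIntegral.integral_add_adjacent_intervals (b := h)
      (hgimax 0 h) (hgimax h 1)]
    have e1 : ∫ y in (0:ℝ)..h, g (max (y - h) 0) = ∫ y in (0:ℝ)..h, g 0 := by
      refine intervalIntegral.integral_congr fun y hy => ?_
      rw [Set.uIcc_of_le h0.le] at hy
      rw [max_eq_right (by linarith [hy.2])]
    have e2 : ∫ y in h..1, g (max (y - h) 0) = ∫ y in h..1, g (y - h) := by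
      refine intervalIntegral.integral_congr fun y hy => ?_
      rw [Set.uIcc_of_le (by linarith : h ≤ 1)] at hy
      rw [max_eq_left (by linarith [hy.1])]
    rw [e1, e2, intervalIntegral.integral_comp_sub_right g h,
      intervalIntegral.integral_const]
    norm_num
  rw [hA, hB]
  have hsplit1 : ∫ y in h..1, g y = (∫ y in h..(1-h), g y) + ∫ y in (1-h:ℝ)..1, g y :=
    (intervalIntegral.integral_add_adjacent_intervals (hgi h (1-h)) (hgi (1-h) 1)).symm
  have hsplit2 : ∫ y in (0:ℝ)..(1-h), g y = (∫ y in (0:ℝ)..h, g y) + ∫ y in h..(1-h), g y :=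
    (intervalIntegral.integral_add_adjacent_intervals (hgi 0 h) (hgi h (1-h))).symm
  have hup : ∫ y in (1-h:ℝ)..1, g y ≤ h * g 1 := by
    have := intervalIntegral.integral_mono_on (by linarith : (1-h:ℝ) ≤ 1) (hgi (1-h) 1)
      (intervalIntegrable_const (c := g 1)) (fun y hy => hm ⟨by linarith [hy.1], hy.2⟩
        ⟨zero_le_one, le_rfl⟩ hy.2)
    exact this.trans_eq (by rw [intervalIntegral.integral_const, smul_eq_mul]; ring)
  have hlo : h * g 0 ≤ ∫ y in (0:ℝ)..h, g y := by
    have := intervalIntegral.integral_mono_on h0.le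
      (intervalIntegrable_const (c := g 0)) (hgi 0 h)
      (fun y hy => hm ⟨le_rfl, zero_le_one⟩ ⟨hy.1, by linarith [hy.2]⟩ hy.1)
    exact (le_of_eq (by rw [intervalIntegral.integral_const, smul_eq_mul]; ring)).trans this
  rw [hsplit1, hsplit2]
  linarith

lemma key_pt {g : ℝ → ℝ} (hr : ∀ y, g y ∈ Set.Icc (0:ℝ) 1)
    (hm : MonotoneOn g (Set.Icc (0:ℝ) 1))
    (n : ℕ) (hn : 1 ≤ n) {y : ℝ} (hy : y ∈ Set.Ico (0:ℝ) 1) :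
    (g (setBinDigit n 1 y) - g (setBinDigit n 0 y))^2
      ≤ g (min (y + ((2:ℝ)^n)⁻¹) 1) - g (max (y - ((2:ℝ)^n)⁻¹) 0) := by
  obtain ⟨h1, h2, h3⟩ := digit_facts n hn hy
  have hip : (0:ℝ) < ((2:ℝ)^n)⁻¹ := by positivity
  have hlo : max (y - ((2:ℝ)^n)⁻¹) 0 ∈ Set.Icc (0:ℝ) 1 :=
    ⟨le_max_right _ _, max_le (by linarith [hy.2]) zero_le_one⟩
  have hhi : min (y + ((2:ℝ)^n)⁻¹) 1 ∈ Set.Icc (0:ℝ) 1 :=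
    ⟨le_min (by linarith [hy.1]) zero_le_one, min_le_right _ _⟩
  have hs0 : setBinDigit n 0 y ∈ Set.Icc (0:ℝ) 1 :=
    ⟨le_trans hlo.1 h1, le_trans (h2.trans h3) hhi.2⟩
  have hs1 : setBinDigit n 1 y ∈ Set.Icc (0:ℝ) 1 :=
    ⟨le_trans (hlo.1.trans h1) h2, le_trans h3 hhi.2⟩
  have e1 : g (setBinDigit n 0 y) ≤ g (setBinDigit n 1 y) := hm hs0 hs1 h2
  have e2 : g (setBinDigit n 1 y) ≤ g (min (y + ((2:ℝ)^n)⁻¹) 1) := hm hs1 hhi h3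
  have e3 : g (max (y - ((2:ℝ)^n)⁻¹) 0) ≤ g (setBinDigit n 0 y) := hm hlo hs0 h1
  have d01 : g (setBinDigit n 1 y) - g (setBinDigit n 0 y) ≤ 1 := by
    have := (hr (setBinDigit n 1 y)).2
    have := (hr (setBinDigit n 0 y)).1
    linarith
  nlinarith [e1, e2, e3, d01]

lemma indep_mono {Ω : Type*} {mΩ : MeasurableSpace Ω} {μ : Measure Ω}
    {m1 m2 m1' m2' : MeasurableSpace Ω} (h : Indep m1 m2 μ) (h1 : m1' ≤ m1) (h2 : m2' ≤ m2) :
    Indep m1' m2' μ := by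
  rw [Indep_iff] at h ⊢
  exact fun t1 t2 ht1 ht2 => h t1 t2 (h1 _ ht1) (h2 _ ht2)

lemma integrable_of_bdd {α : Type*} [MeasurableSpace α] {μ : Measure α} [IsFiniteMeasure μ]
    {g : α → ℝ} (hm : AEStronglyMeasurable g μ) (C : ℝ) (h : ∀ x, |g x| ≤ C) : Integrable g μ :=
  ⟨hm, HasFiniteIntegral.of_bounded (C := C) (ae_of_all _ (fun x => by
    simpa [Real.norm_eq_abs] using h x))⟩

theorem digit_influences_L2_bound
    (μ : Measure (ℕ → ℝ)) [IsProbabilityMeasure μ]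
    (hindep : iIndepFun (fun j (x : ℕ → ℝ) => x j) μ)
    (hmarg : ∀ j, μ.map (fun x => x j) = (volume : Measure ℝ).restrict (Set.Icc (0 : ℝ) 1))
    (f : (ℕ → ℝ) → ℝ) (hfmeas : Measurable f)
    (hrange : ∀ x, f x ∈ Set.Icc (0 : ℝ) 1)
    (hmono : ∀ x y : ℕ → ℝ, (∀ j, x j ∈ Set.Icc (0 : ℝ) 1) → (∀ j, y j ∈ Set.Icc (0 : ℝ) 1) →
      x ≤ y → f x ≤ f y)
    (j : ℕ) :
    (∑' i : ℕ, (1 / 4) *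
        ∫ u, (f (Function.update u j (setBinDigit (i + 1) 1 (u j)))
              - f (Function.update u j (setBinDigit (i + 1) 0 (u j)))) ^ 2 ∂μ)
      ≤ (1 / 2) * ∫ u, (f (Function.update u j 1) - f (Function.update u j 0)) ∂μ := by
  classical
  set ρ : Measure ℝ := (volume : Measure ℝ).restrict (Set.Icc (0:ℝ) 1) with hρdef
  haveI hρprob : IsProbabilityMeasure ρ :=
    ⟨by rw [hρdef, Measure.restrict_apply_univ, Real.volume_Icc]; norm_num⟩
  have hX : Measurable (fun u : ℕ → ℝ => Function.update u j 0) := by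
    apply measurable_pi_lambda
    intro k
    by_cases hk : k = j
    · subst hk
      simp only [Function.update_self]
      exact measurable_const
    · simp only [Function.update_apply, if_neg hk]
      exact measurable_pi_apply k
  set ν : Measure (ℕ → ℝ) := μ.map (fun u => Function.update u j 0) with hνdef
  haveI : IsProbabilityMeasure ν := Measure.isProbabilityMeasure_map hX.aemeasurable
  -- independence of the rest from coordinate j
  have hindepXY : IndepFun (fun u : ℕ → ℝ => Function.update u j 0)
      (fun u : ℕ → ℝ => u j) μ := by
    rw [IndepFun_iff_Indep]
    have h1 := (iIndepFun_iff_iIndep _ _ μ).mp hindep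
    have hle : ∀ k, MeasurableSpace.comap (fun u : ℕ → ℝ => u k) Real.measurableSpace
        ≤ MeasurableSpace.pi :=
      fun k => measurable_iff_comap_le.mp (measurable_pi_apply k)
    have h2 := indep_iSup_of_disjoint hle h1
      (disjoint_compl_left : Disjoint (({j} : Set ℕ)ᶜ) ({j} : Set ℕ))
    refine indep_mono h2 ?_ ?_
    · set M := ⨆ k ∈ ({j} : Set ℕ)ᶜ, MeasurableSpace.comap (fun u : ℕ → ℝ => u k)
        Real.measurableSpace with hM
      have hcoord : ∀ k, @Measurable (ℕ → ℝ) ℝ M Real.measurableSpace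
          (fun u => Function.update u j 0 k) := by
        intro k
        by_cases hk : k = j
        · subst hk
          simp only [Function.update_self]
          exact @measurable_const ℝ (ℕ → ℝ) _ M 0
        · simp only [Function.update_apply, if_neg hk]
          refine measurable_iff_comap_le.mpr ?_
          exact le_biSup (fun k => MeasurableSpace.comap (fun u : ℕ → ℝ => u k)
            Real.measurableSpace) (by simp [hk])
      rw [← measurable_iff_comap_le]
      exact measurable_pi_iff.mpr hcoord
    · exact le_biSup (fun k => MeasurableSpace.comap (fun u : ℕ → ℝ => u k)
        Real.measurableSpace) (Set.mem_singleton j)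
  have hmapXY : μ.map (fun u => (Function.update u j 0, u j)) = ν.prod ρ := by
    rw [(indepFun_iff_map_prod_eq_prod_map_map hX.aemeasurable
      (measurable_pi_apply j).aemeasurable).mp hindepXY, hmarg j]
  -- Fubini transfer
  have transfer : ∀ Φ : (ℕ → ℝ) × ℝ → ℝ, Measurable Φ → (∀ p, |Φ p| ≤ 1) →
      ∫ u, Φ (Function.update u j 0, u j) ∂μ = ∫ v, (∫ y, Φ (v, y) ∂ρ) ∂ν := by
    intro Φ hΦ hb
    have hpair : AEMeasurable (fun u : ℕ → ℝ => (Function.update u j 0, u j)) μ :=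
      (hX.prodMk (measurable_pi_apply j)).aemeasurable
    calc ∫ u, Φ (Function.update u j 0, u j) ∂μ
        = ∫ p, Φ p ∂(μ.map (fun u : ℕ → ℝ => (Function.update u j 0, u j))) :=
          (integral_map hpair hΦ.aestronglyMeasurable).symm
      _ = ∫ p, Φ p ∂(ν.prod ρ) := by rw [hmapXY]
      _ = ∫ v, (∫ y, Φ (v, y) ∂ρ) ∂ν :=
          integral_prod _ (integrable_of_bdd hΦ.aestronglyMeasurable 1 hb)
  -- measurability of update maps
  have hupdate : ∀ φ : ℝ → ℝ, Measurable φ →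
      Measurable (fun p : (ℕ → ℝ) × ℝ => Function.update p.1 j (φ p.2)) := by
    intro φ hφ
    apply measurable_pi_lambda
    intro k
    by_cases hk : k = j
    · subst hk
      simp only [Function.update_self]
      exact hφ.comp measurable_snd
    · simp only [Function.update_apply, if_neg hk]
      exact (measurable_pi_apply k).comp measurable_fst
  have hupc : ∀ c : ℝ, Measurable (fun v : ℕ → ℝ => Function.update v j c) := by
    intro c
    have := (hupdate (fun _ => c) measurable_const).comp
      (measurable_id.prodMk (measurable_const : Measurable fun _ : ℕ → ℝ => (0:ℝ)))
    exact this
  have hRmeas : ∀ c : ℝ, Measurable (fun v : ℕ → ℝ => f (Function.update v j c)) :=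
    fun c => hfmeas.comp (hupc c)
  -- a.e. coordinate facts
  have haeμ : ∀ᵐ u ∂μ, ∀ k, u k ∈ Set.Icc (0:ℝ) 1 := by
    rw [ae_all_iff]
    intro k
    have hpre : μ ((fun u : ℕ → ℝ => u k) ⁻¹' (Set.Icc (0:ℝ) 1)ᶜ) = 0 := by
      rw [← Measure.map_apply (measurable_pi_apply k) measurableSet_Icc.compl, hmarg k,
        Measure.restrict_apply measurableSet_Icc.compl]
      simp
    rw [ae_iff]
    exact hpre
  have haeν : ∀ᵐ v ∂ν, ∀ k, v k ∈ Set.Icc (0:ℝ) 1 := by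
    rw [hνdef]
    have hS : MeasurableSet {v : ℕ → ℝ | ∀ k, v k ∈ Set.Icc (0:ℝ) 1} := by
      have : {v : ℕ → ℝ | ∀ k, v k ∈ Set.Icc (0:ℝ) 1}
          = ⋂ k, (fun v : ℕ → ℝ => v k) ⁻¹' (Set.Icc (0:ℝ) 1) := by
        ext v; simp
      rw [this]
      exact MeasurableSet.iInter fun k => (measurable_pi_apply k) measurableSet_Icc
    rw [ae_map_iff hX.aemeasurable hS]
    filter_upwards [haeμ] with u hu k
    by_cases hk : k = j
    · subst hk
      simp only [Function.update_self]
      exact ⟨le_rfl, zero_le_one⟩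
    · simpa [Function.update_apply, hk] using hu k
  have haeρ : ∀ᵐ y ∂ρ, y ∈ Set.Ico (0:ℝ) 1 := by
    rw [hρdef, ae_restrict_iff' measurableSet_Icc]
    have h2 : ({(1:ℝ)} : Set ℝ)ᶜ ∈ ae (volume : Measure ℝ) :=
      compl_mem_ae_iff.mpr (by simp)
    filter_upwards [h2] with y hy hmem
    exact ⟨hmem.1, lt_of_le_of_ne hmem.2 (by simpa using hy)⟩
  -- monotone sections
  have hgmono : ∀ v : ℕ → ℝ, (∀ k, v k ∈ Set.Icc (0:ℝ) 1) →
      MonotoneOn (fun y => f (Function.update v j y)) (Set.Icc (0:ℝ) 1) := by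
    intro v hv a ha b hb hab
    refine hmono _ _ ?_ ?_ ?_
    · intro k
      rw [Function.update_apply]
      split_ifs
      · exact ha
      · exact hv k
    · intro k
      rw [Function.update_apply]
      split_ifs
      · exact hb
      · exact hv k
    · refine Pi.le_def.mpr fun k => ?_
      simp only [Function.update_apply]
      split_ifs
      · exact hab
      · exact le_rfl
  have hfd : ∀ a b : ℕ → ℝ, |f a - f b| ≤ 1 := by
    intro a b
    rw [abs_le]
    constructor <;> linarith [(hrange a).1, (hrange a).2, (hrange b).1, (hrange b).2]
  -- transport of the RHS integral
  have hR : ∫ v, (f (Function.update v j 1) - f (Function.update v j 0)) ∂ν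
      = ∫ u, (f (Function.update u j 1) - f (Function.update u j 0)) ∂μ := by
    rw [hνdef, integral_map hX.aemeasurable
      (f := fun v => f (Function.update v j 1) - f (Function.update v j 0))
      (((hRmeas 1).sub (hRmeas 0)).aestronglyMeasurable)]
    refine integral_congr_ae (ae_of_all _ fun u => ?_)
    simp [Function.update_idem]
  -- per-index estimate
  have key : ∀ i : ℕ,
      ∫ u, (f (Function.update u j (setBinDigit (i + 1) 1 (u j)))
            - f (Function.update u j (setBinDigit (i + 1) 0 (u j)))) ^ 2 ∂μ
      ≤ 2 * ((2:ℝ)^(i+1))⁻¹ *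
          ∫ u, (f (Function.update u j 1) - f (Function.update u j 0)) ∂μ := by
    intro i
    set h : ℝ := ((2:ℝ)^(i+1))⁻¹ with hhdef
    have h0 : 0 < h := by rw [hhdef]; positivity
    have h12 : h ≤ 1/2 := by
      rw [hhdef]
      have h2le : (2:ℝ) ≤ 2^(i+1) := by
        calc (2:ℝ) = 2^1 := (pow_one 2).symm
          _ ≤ 2^(i+1) := by
            apply pow_le_pow_right₀ (by norm_num) (by omega)
      calc ((2:ℝ)^(i+1))⁻¹ ≤ (2:ℝ)⁻¹ := by
            apply inv_anti₀ (by norm_num) h2le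
        _ = 1/2 := by norm_num
    have hΦm : Measurable (fun p : (ℕ → ℝ) × ℝ =>
        (f (Function.update p.1 j (setBinDigit (i+1) 1 p.2))
          - f (Function.update p.1 j (setBinDigit (i+1) 0 p.2))) ^ 2) :=
      ((hfmeas.comp (hupdate _ (measurable_setBinDigit (i+1) 1))).sub
        (hfmeas.comp (hupdate _ (measurable_setBinDigit (i+1) 0)))).pow_const 2
    have hΦb : ∀ p : (ℕ → ℝ) × ℝ,
        |(f (Function.update p.1 j (setBinDigit (i+1) 1 p.2))
          - f (Function.update p.1 j (setBinDigit (i+1) 0 p.2))) ^ 2| ≤ 1 := by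
      intro p
      have h1 := hfd (Function.update p.1 j (setBinDigit (i+1) 1 p.2))
        (Function.update p.1 j (setBinDigit (i+1) 0 p.2))
      rw [abs_le] at h1 ⊢
      constructor <;> nlinarith [h1.1, h1.2]
    have e0 : ∫ u, (f (Function.update u j (setBinDigit (i + 1) 1 (u j)))
            - f (Function.update u j (setBinDigit (i + 1) 0 (u j)))) ^ 2 ∂μ
        = ∫ v, (∫ y, (f (Function.update v j (setBinDigit (i+1) 1 y))
            - f (Function.update v j (setBinDigit (i+1) 0 y))) ^ 2 ∂ρ) ∂ν := by
      rw [← transfer _ hΦm hΦb]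
      refine integral_congr_ae (ae_of_all _ fun u => ?_)
      simp [Function.update_idem]
    rw [e0]
    have hinner : ∀ᵐ v ∂ν,
        (∫ y, (f (Function.update v j (setBinDigit (i+1) 1 y))
          - f (Function.update v j (setBinDigit (i+1) 0 y))) ^ 2 ∂ρ)
        ≤ 2 * h * (f (Function.update v j 1) - f (Function.update v j 0)) := by
      filter_upwards [haeν] with v hv
      have hgm : Measurable (fun y => f (Function.update v j y)) :=
        hfmeas.comp (measurable_update v)
      have hgr : ∀ y, f (Function.update v j y) ∈ Set.Icc (0:ℝ) 1 := fun y => hrange _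
      have hgmono' := hgmono v hv
      have step1 : (∫ y, (f (Function.update v j (setBinDigit (i+1) 1 y))
          - f (Function.update v j (setBinDigit (i+1) 0 y))) ^ 2 ∂ρ)
          ≤ ∫ y, (f (Function.update v j (min (y + h) 1))
              - f (Function.update v j (max (y - h) 0))) ∂ρ := by
        refine integral_mono_ae ?_ ?_ ?_
        · exact integrable_of_bdd (hΦm.comp measurable_prodMk_left).aestronglyMeasurable 1
            (fun y => hΦb (v, y))
        · refine integrable_of_bdd ?_ 1 ?_
          · exact ((hfmeas.comp ((measurable_update v).comp
              ((measurable_id.add_const h).min measurable_const))).sub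
              (hfmeas.comp ((measurable_update v).comp
              ((measurable_id.sub_const h).max measurable_const)))).aestronglyMeasurable
          · exact fun y => hfd _ _
        · filter_upwards [haeρ] with y hy
          have := key_pt hgr hgmono' (i+1) (by omega) hy
          simpa [hhdef] using this
      have step2 : (∫ y, (f (Function.update v j (min (y + h) 1))
              - f (Function.update v j (max (y - h) 0))) ∂ρ)
          ≤ 2 * h * (f (Function.update v j 1) - f (Function.update v j 0)) := by
        have := oneD hgm hgr hgmono' h0 h12
        rw [hρdef]
        exact this
      exact step1.trans step2
    have hint1 : Integrable (fun v => ∫ y, (f (Function.update v j (setBinDigit (i+1) 1 y))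
        - f (Function.update v j (setBinDigit (i+1) 0 y))) ^ 2 ∂ρ) ν :=
      (integrable_of_bdd hΦm.aestronglyMeasurable 1 hΦb).integral_prod_left
    have hint2 : Integrable (fun v => 2 * h * (f (Function.update v j 1)
        - f (Function.update v j 0))) ν := by
      refine integrable_of_bdd
        (((hRmeas 1).sub (hRmeas 0)).const_mul (2*h)).aestronglyMeasurable (2*h) ?_
      intro v
      rw [abs_mul, abs_of_nonneg (by positivity : (0:ℝ) ≤ 2*h)]
      have hd := hfd (Function.update v j 1) (Function.update v j 0)
      nlinarith [abs_nonneg (f (Function.update v j 1) - f (Function.update v j 0))]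
    calc ∫ v, (∫ y, (f (Function.update v j (setBinDigit (i+1) 1 y))
            - f (Function.update v j (setBinDigit (i+1) 0 y))) ^ 2 ∂ρ) ∂ν
        ≤ ∫ v, 2 * h * (f (Function.update v j 1) - f (Function.update v j 0)) ∂ν :=
          integral_mono_ae hint1 hint2 hinner
      _ = 2 * h * ∫ v, (f (Function.update v j 1) - f (Function.update v j 0)) ∂ν :=
          integral_const_mul _ _
      _ = 2 * h * ∫ u, (f (Function.update u j 1) - f (Function.update u j 0)) ∂μ := by
          rw [hR]
  -- summation
  set R : ℝ := ∫ u, (f (Function.update u j 1) - f (Function.update u j 0)) ∂μ with hRdef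
  have hsum_bound : Summable (fun i : ℕ => (R/4) * (2⁻¹:ℝ)^i) :=
    (summable_geometric_of_lt_one (by norm_num) (by norm_num)).mul_left _
  have hterm_le : ∀ i : ℕ, (1/4 : ℝ) *
      (∫ u, (f (Function.update u j (setBinDigit (i + 1) 1 (u j)))
            - f (Function.update u j (setBinDigit (i + 1) 0 (u j)))) ^ 2 ∂μ)
      ≤ (R/4) * (2⁻¹:ℝ)^i := by
    intro i
    have hk := key i
    have heq : (1/4:ℝ) * (2 * ((2:ℝ)^(i+1))⁻¹ * R) = (R/4) * (2⁻¹:ℝ)^i := by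
      rw [pow_succ, mul_inv, ← inv_pow]
      ring
    calc (1/4 : ℝ) * (∫ u, (f (Function.update u j (setBinDigit (i + 1) 1 (u j)))
            - f (Function.update u j (setBinDigit (i + 1) 0 (u j)))) ^ 2 ∂μ)
        ≤ (1/4:ℝ) * (2 * ((2:ℝ)^(i+1))⁻¹ * R) := by
          apply mul_le_mul_of_nonneg_left _ (by norm_num)
          exact hk
      _ = (R/4) * (2⁻¹:ℝ)^i := heq
  have hnn : ∀ i : ℕ, 0 ≤ (1/4 : ℝ) *
      (∫ u, (f (Function.update u j (setBinDigit (i + 1) 1 (u j)))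
            - f (Function.update u j (setBinDigit (i + 1) 0 (u j)))) ^ 2 ∂μ) :=
    fun i => mul_nonneg (by norm_num) (integral_nonneg fun u => sq_nonneg _)
  calc (∑' i : ℕ, (1 / 4) *
        ∫ u, (f (Function.update u j (setBinDigit (i + 1) 1 (u j)))
              - f (Function.update u j (setBinDigit (i + 1) 0 (u j)))) ^ 2 ∂μ)
      ≤ ∑' i : ℕ, (R/4) * (2⁻¹:ℝ)^i :=
        Summable.tsum_le_tsum hterm_le (Summable.of_nonneg_of_le hnn hterm_le hsum_bound) hsum_bound
    _ = (R/4) * (1 - 2⁻¹)⁻¹ := by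
        rw [tsum_mul_left, tsum_geometric_of_lt_one (by norm_num) (by norm_num)]
    _ = (1/2) * R := by norm_num; ring
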